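/- Let G be an abelian group acting by continuous affine maps on a nonempty convex compact subset K of a topological vector space. Then there is a G-fixed point in K. -/

import Mathlib

open Finset Set Pointwise Topology Filter

/-- Markov–Kakutani fixed point theorem: an abelian group acting by continuous
affine maps on a nonempty convex compact subset `K` of a Hausdorff topological
real vector space has a fixed point in `K`. -/
theorem markov_kakutani {E : Type*} [AddCommGroup E] [Module ℝ E]
    [TopologicalSpace E] [IsTopologicalAddGroup E] [ContinuousSMul ℝ E] [T2Space E]
    {G : Type*} [CommGroup G]
    (K : Set E) (hconv : Convex ℝ K) (hcomp : IsCompact K) (hne : K.Nonempty)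
    (T : G → E → E)
    (hcont : ∀ g : G, ContinuousOn (T g) K)
    (hmaps : ∀ g : G, Set.MapsTo (T g) K K)
    (haff : ∀ g : G, ∀ x ∈ K, ∀ y ∈ K, ∀ t ∈ Set.Icc (0 : ℝ) 1,
      T g (t • x + (1 - t) • y) = t • T g x + (1 - t) • T g y)
    (hone : ∀ x ∈ K, T 1 x = x)
    (hmul : ∀ g h : G, ∀ x ∈ K, T (g * h) x = T g (T h x)) :
    ∃ x ∈ K, ∀ g : G, T g x = x := by
  classical
  -- the averaging operators
  set A : G → ℕ → E → E :=
    fun g n x => ((n : ℝ))⁻¹ • ∑ k ∈ Finset.range n, T (g ^ k) x with hAdef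
  -- key lemma: an affine self-map of K commutes with averages
  have key : ∀ f : E → E, Set.MapsTo f K K →
      (∀ x ∈ K, ∀ y ∈ K, ∀ t ∈ Set.Icc (0:ℝ) 1,
        f (t • x + (1 - t) • y) = t • f x + (1 - t) • f y) →
      ∀ p : ℕ → E, (∀ k, p k ∈ K) → ∀ n : ℕ,
        (((n+1 : ℕ) : ℝ))⁻¹ • ∑ k ∈ Finset.range (n+1), p k ∈ K ∧
        f ((((n+1 : ℕ) : ℝ))⁻¹ • ∑ k ∈ Finset.range (n+1), p k) =
          (((n+1 : ℕ) : ℝ))⁻¹ • ∑ k ∈ Finset.range (n+1), f (p k) := by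
    intro f hf haf p hp n
    induction n with
    | zero =>
      norm_num [Finset.sum_range_one]
      exact hp 0
    | succ n ih =>
      set t : ℝ := ((n:ℝ)+1)/((n:ℝ)+2) with htdef
      have h2 : ((n:ℝ)+2) ≠ 0 := by positivity
      have ht : t ∈ Set.Icc (0:ℝ) 1 := by
        constructor
        · positivity
        · rw [htdef, div_le_one (by positivity)]; linarith
      have e1 : t * (((n+1 : ℕ):ℝ))⁻¹ = (((n+2 : ℕ):ℝ))⁻¹ := by
        push_cast
        field_simp [htdef]
        have ht2 : t * ((n:ℝ)+2) = (n:ℝ)+1 := by rw [htdef]; exact div_mul_cancel₀ _ h2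
        linear_combination ht2
      have e2 : 1 - t = (((n+2 : ℕ):ℝ))⁻¹ := by
        push_cast
        field_simp [htdef]
        have ht2 : t * ((n:ℝ)+2) = (n:ℝ)+1 := by rw [htdef]; exact div_mul_cancel₀ _ h2
        linear_combination -ht2
      have hS : ∀ q : ℕ → E,
          (((n+2 : ℕ):ℝ))⁻¹ • ∑ k ∈ Finset.range (n+2), q k =
          t • ((((n+1 : ℕ):ℝ))⁻¹ • ∑ k ∈ Finset.range (n+1), q k) + (1 - t) • q (n+1) := by
        intro q
        rw [Finset.sum_range_succ, smul_add, smul_smul, e1, e2]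
      constructor
      · rw [hS p]
        exact hconv ih.1 (hp (n+1)) ht.1 (by linarith [ht.2]) (by ring)
      · rw [hS p, haf _ ih.1 _ (hp (n+1)) t ht, ih.2, hS (fun k => f (p k))]
  -- T 1 is affine on K
  have haff1 : ∀ x ∈ K, ∀ y ∈ K, ∀ t ∈ Set.Icc (0:ℝ) 1,
      T 1 (t • x + (1 - t) • y) = t • T 1 x + (1 - t) • T 1 y := by
    intro x hx y hy t ht
    have hm : t • x + (1 - t) • y ∈ K :=
      hconv hx hy ht.1 (by linarith [ht.2]) (by ring)
    rw [hone _ hm, hone _ hx, hone _ hy]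
  -- averages stay in K
  have hAK : ∀ g : G, ∀ n : ℕ, ∀ x ∈ K, A g (n+1) x ∈ K := by
    intro g n x hx
    exact (key (T 1) (hmaps 1) haff1 (fun k => T (g ^ k) x)
      (fun k => hmaps _ hx) n).1
  -- T commutes with the averages
  have hTA : ∀ h g : G, ∀ n : ℕ, ∀ x ∈ K, T h (A g (n+1) x) = A g (n+1) (T h x) := by
    intro h g n x hx
    have := (key (T h) (hmaps h) (haff h) (fun k => T (g ^ k) x)
      (fun k => hmaps _ hx) n).2
    rw [hAdef]
    simp only
    rw [this]
    congr 1
    refine Finset.sum_congr rfl fun k _ => ?_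
    rw [← hmul h (g ^ k) x hx, mul_comm, hmul (g ^ k) h x hx]
  -- the averages commute with each other
  have hAA : ∀ g : G, ∀ n : ℕ, ∀ h : G, ∀ m : ℕ, ∀ x ∈ K,
      A h (m+1) (A g (n+1) x) = A g (n+1) (A h (m+1) x) := by
    intro g n h m x hx
    have l1 : A h (m+1) (A g (n+1) x)
        = (((m+1 : ℕ):ℝ))⁻¹ • ∑ k ∈ Finset.range (m+1), A g (n+1) (T (h ^ k) x) := by
      rw [hAdef]
      simp only
      congr 1
      exact Finset.sum_congr rfl fun k _ => hTA (h ^ k) g n x hx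
    have r1 : A g (n+1) (A h (m+1) x)
        = (((n+1 : ℕ):ℝ))⁻¹ • ∑ j ∈ Finset.range (n+1), A h (m+1) (T (g ^ j) x) := by
      rw [hAdef]
      simp only
      congr 1
      exact Finset.sum_congr rfl fun j _ => hTA (g ^ j) h m x hx
    rw [l1, r1, hAdef]
    simp only
    rw [← Finset.smul_sum, ← Finset.smul_sum,
      smul_comm ((((m+1:ℕ)):ℝ))⁻¹ ((((n+1:ℕ)):ℝ))⁻¹, Finset.sum_comm]
    congr 2
    refine Finset.sum_congr rfl fun j _ => Finset.sum_congr rfl fun k _ => ?_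
    rw [← hmul (g ^ j) (h ^ k) x hx, mul_comm, hmul (h ^ k) (g ^ j) x hx]
  -- continuity of averages on K
  have hAc : ∀ g : G, ∀ n : ℕ, ContinuousOn (A g n) K := by
    intro g n
    exact (continuousOn_finset_sum (Finset.range n)
      (fun k _ => hcont (g ^ k))).const_smul _
  -- the compact sets
  set C : G × ℕ → Set E := fun i => (A i.1 (i.2+1)) '' K with hCdef
  have hCsub : ∀ i, C i ⊆ K := by
    rintro ⟨g, n⟩ y ⟨x, hx, rfl⟩
    exact hAK g n x hx
  have hCcl : ∀ i, IsClosed (C i) :=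
    fun i => (hcomp.image_of_continuousOn (hAc i.1 (i.2+1))).isClosed
  -- finite intersection property
  have hfin : ∀ u : Finset (G × ℕ), (K ∩ ⋂ i ∈ u, C i).Nonempty := by
    intro u
    induction u using Finset.induction_on with
    | empty => simpa using hne
    | @insert a u hni ih =>
      obtain ⟨x, hxK, hxI⟩ := ih
      simp only [Set.mem_iInter] at hxI
      refine ⟨A a.1 (a.2+1) x, hAK a.1 a.2 x hxK, ?_⟩
      simp only [Set.mem_iInter, Finset.mem_insert]
      rintro i (rfl | hi)
      · exact ⟨x, hxK, rfl⟩
      · obtain ⟨z, hz, hzx⟩ := hxI i hi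
        exact ⟨A a.1 (a.2+1) z, hAK a.1 a.2 z hz, by rw [← hzx, hAA]; exact hz⟩
  obtain ⟨x, hxK, hxI⟩ := hcomp.inter_iInter_nonempty C hCcl hfin
  simp only [Set.mem_iInter] at hxI
  refine ⟨x, hxK, fun g => ?_⟩
  -- the difference vector
  set v : E := T g x - x with hvdef
  -- express v for each n
  have hvn : ∀ n : ℕ, ∃ y ∈ K, v = (((n+1 : ℕ):ℝ))⁻¹ • (T (g ^ (n+1)) y - y) := by
    intro n
    obtain ⟨y, hyK, hyA⟩ := hxI (g, n)
    have hyA' : A g (n+1) y = x := hyA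
    refine ⟨y, hyK, ?_⟩
    have h1 : T g x = A g (n+1) (T g y) := by rw [← hyA', hTA g g n y hyK]
    have h2 : ∀ k, T (g ^ k) (T g y) = T (g ^ (k+1)) y := by
      intro k
      rw [← hmul (g ^ k) g y hyK, pow_succ]
    have h3 : (∑ k ∈ Finset.range (n+1), T (g ^ k) (T g y))
        - ∑ k ∈ Finset.range (n+1), T (g ^ k) y = T (g ^ (n+1)) y - y := by
      rw [← Finset.sum_sub_distrib]
      calc ∑ k ∈ Finset.range (n+1), (T (g ^ k) (T g y) - T (g ^ k) y)
          = ∑ k ∈ Finset.range (n+1), (T (g ^ (k+1)) y - T (g ^ k) y) :=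
            Finset.sum_congr rfl fun k _ => by rw [h2 k]
        _ = T (g ^ (n+1)) y - T (g ^ 0) y :=
            Finset.sum_range_sub (fun k => T (g ^ k) y) (n+1)
        _ = T (g ^ (n+1)) y - y := by rw [pow_zero, hone y hyK]
    rw [hvdef, h1, ← hyA', hAdef]
    simp only
    rw [← smul_sub, h3]
  -- boundedness of K - K
  letI : UniformSpace E := IsTopologicalAddGroup.rightUniformSpace E
  haveI : IsUniformAddGroup E := isUniformAddGroup_of_addCommGroup
  have hD : Bornology.IsVonNBounded ℝ (K - K) := by
    have : IsCompact (K - K) := by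
      rw [sub_eq_add_neg]
      exact hcomp.add hcomp.neg
    exact this.totallyBounded.isVonNBounded ℝ
  -- v belongs to every neighbourhood of 0
  have hv0 : v = 0 := by
    by_contra hv
    have hU : ({v}ᶜ : Set E) ∈ 𝓝 (0:E) :=
      isOpen_compl_singleton.mem_nhds (by simpa using (Ne.symm hv))
    have habs := hD hU
    rw [absorbs_iff_norm] at habs
    obtain ⟨r, hr⟩ := habs
    obtain ⟨n, hn⟩ := exists_nat_ge r
    have hle : r ≤ ‖(((n+1 : ℕ):ℝ))‖ := by
      rw [Real.norm_eq_abs]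
      push_cast
      have : (0:ℝ) ≤ (n:ℝ) + 1 := by positivity
      rw [abs_of_nonneg this]
      linarith
    have hsub := hr (((n+1 : ℕ):ℝ)) hle
    obtain ⟨y, hyK, hvy⟩ := hvn n
    have hd : T (g ^ (n+1)) y - y ∈ (((n+1 : ℕ):ℝ)) • ({v}ᶜ : Set E) :=
      hsub (Set.sub_mem_sub (hmaps _ hyK) hyK)
    obtain ⟨u, hu, huv⟩ := hd
    apply hu
    have hne1 : (((n+1 : ℕ):ℝ)) ≠ 0 := by positivity
    have : v = u := by
      rw [hvy, ← huv, smul_smul, inv_mul_cancel₀ hne1, one_smul]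
    simp [← this]
  rw [hvdef] at hv0
  exact sub_eq_zero.mp hv0
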